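/- Let m, n ≥ 1, γ ≥ 0 and τ > 0. Let A be a random matrix over F₂^{m×n} with min-entropy H_∞(A) ≥ (1−γ)·m·n, and let A₀ be a matrix in the support of A that is not τ-rare. Then there exists a set S ⊆ {1, …, m} with |S| ≤ √(τ+γ)·m such that q_i(A₀) ≥ (1−√(τ+γ))·n for every i ∉ S. -/
import Mathlib


open Finset

open Classical in
/-- Probability of an event for a random matrix over `F₂` with mass function `μ`. -/
noncomputable def prEvt {m n : ℕ} (μ : Matrix (Fin m) (Fin n) (ZMod 2) → ℝ)
    (E : Matrix (Fin m) (Fin n) (ZMod 2) → Prop) : ℝ :=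
  ∑ A, if E A then μ A else 0

/-- `rowsAgree i A B` says that the first `i` rows of `A` and `B` coincide. -/
def rowsAgree {m n : ℕ} (i : ℕ) (A B : Matrix (Fin m) (Fin n) (ZMod 2)) : Prop :=
  ∀ j : Fin m, (j : ℕ) < i → A j = B j

/-- `pIdx μ i A₀` is the conditional probability that row `i` of a `μ`-random matrix equals
row `i` of `A₀`, given that the previous rows agree with those of `A₀`. -/
noncomputable def pIdx {m n : ℕ} (μ : Matrix (Fin m) (Fin n) (ZMod 2) → ℝ)
    (i : Fin m) (A₀ : Matrix (Fin m) (Fin n) (ZMod 2)) : ℝ :=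
  prEvt μ (fun B => B i = A₀ i ∧ rowsAgree (i : ℕ) B A₀)
    / prEvt μ (fun B => rowsAgree (i : ℕ) B A₀)

/-- `qIdx μ i A₀ = -log₂ (pIdx μ i A₀)`. -/
noncomputable def qIdx {m n : ℕ} (μ : Matrix (Fin m) (Fin n) (ZMod 2) → ℝ)
    (i : Fin m) (A₀ : Matrix (Fin m) (Fin n) (ZMod 2)) : ℝ :=
  -Real.logb 2 (pIdx μ i A₀)

/-- `A₀` is `τ`-rare if some conditional row probability is below `2 ^ (-n (1 + τ))`. -/
def tauRare {m n : ℕ} (μ : Matrix (Fin m) (Fin n) (ZMod 2) → ℝ) (τ : ℝ)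
    (A₀ : Matrix (Fin m) (Fin n) (ZMod 2)) : Prop :=
  ∃ i : Fin m, pIdx μ i A₀ < (2 : ℝ) ^ (-((n : ℝ) * (1 + τ)))


open Classical in
lemma prEvt_nonneg {m n : ℕ} (μ : Matrix (Fin m) (Fin n) (ZMod 2) → ℝ)
    (h0 : ∀ A, 0 ≤ μ A) (E : Matrix (Fin m) (Fin n) (ZMod 2) → Prop) :
    0 ≤ prEvt μ E := by
  apply Finset.sum_nonneg
  intro A _
  split <;> simp [h0 A]

open Classical in
lemma le_prEvt {m n : ℕ} (μ : Matrix (Fin m) (Fin n) (ZMod 2) → ℝ)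
    (h0 : ∀ A, 0 ≤ μ A) {E : Matrix (Fin m) (Fin n) (ZMod 2) → Prop}
    {A₀ : Matrix (Fin m) (Fin n) (ZMod 2)} (hE : E A₀) : μ A₀ ≤ prEvt μ E := by
  have := Finset.single_le_sum (f := fun A => if E A then μ A else 0)
    (fun A _ => by by_cases h : E A <;> simp [h, h0 A]) (Finset.mem_univ A₀)
  simpa [prEvt, if_pos hE] using this

open Classical in
lemma prEvt_congr {m n : ℕ} (μ : Matrix (Fin m) (Fin n) (ZMod 2) → ℝ)
    {E F : Matrix (Fin m) (Fin n) (ZMod 2) → Prop}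
    (h : ∀ A, E A ↔ F A) : prEvt μ E = prEvt μ F := by
  unfold prEvt
  exact Finset.sum_congr rfl fun A _ => by rw [if_congr (h A) rfl rfl]

open Classical in
lemma prEvt_rowsAgree_zero {m n : ℕ} (μ : Matrix (Fin m) (Fin n) (ZMod 2) → ℝ)
    (hμ1 : ∑ A, μ A = 1) (A₀ : Matrix (Fin m) (Fin n) (ZMod 2)) :
    prEvt μ (fun B => rowsAgree 0 B A₀) = 1 := by
  unfold prEvt
  rw [← hμ1]
  exact Finset.sum_congr rfl fun A _ => by
    rw [if_pos]; intro j hj; omega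

open Classical in
lemma prEvt_rowsAgree_top {m n : ℕ} (μ : Matrix (Fin m) (Fin n) (ZMod 2) → ℝ)
    (A₀ : Matrix (Fin m) (Fin n) (ZMod 2)) :
    prEvt μ (fun B => rowsAgree m B A₀) = μ A₀ := by
  unfold prEvt
  have h : ∀ B : Matrix (Fin m) (Fin n) (ZMod 2), rowsAgree m B A₀ ↔ B = A₀ := by
    intro B
    constructor
    · intro h; funext j; exact h j j.isLt
    · rintro rfl; intro j hj; rfl
  calc (∑ A, if rowsAgree m A A₀ then μ A else 0)
      = ∑ A, if A = A₀ then μ A else 0 :=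
        Finset.sum_congr rfl fun A _ => by rw [if_congr (h A) rfl rfl]
    _ = μ A₀ := by rw [Finset.sum_ite_eq' Finset.univ A₀ μ]; simp

/-- If `A` has min-entropy at least `(1-γ)mn` and `A₀` is a non-`τ`-rare matrix in the support,
then at most a `√(τ+γ)` fraction of the rows have small conditional surprise `qᵢ`. -/
theorem exists_bad_row_set (m n : ℕ) (hm : 1 ≤ m) (hn : 1 ≤ n)
    (μ : Matrix (Fin m) (Fin n) (ZMod 2) → ℝ)
    (hμ0 : ∀ A, 0 ≤ μ A) (hμ1 : ∑ A, μ A = 1)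
    (γ τ : ℝ) (hγ : 0 ≤ γ) (hτ : 0 < τ)
    (hminent : ∀ A₀, μ A₀ ≤ (2 : ℝ) ^ (-((1 - γ) * (m : ℝ) * (n : ℝ))))
    (A₀ : Matrix (Fin m) (Fin n) (ZMod 2)) (hsupp : 0 < μ A₀)
    (hrare : ¬ tauRare μ τ A₀) :
    ∃ S : Finset (Fin m), (S.card : ℝ) ≤ Real.sqrt (τ + γ) * (m : ℝ) ∧
      ∀ i : Fin m, i ∉ S → (1 - Real.sqrt (τ + γ)) * (n : ℝ) ≤ qIdx μ i A₀ := by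
  classical
  -- abbreviations
  set s : ℝ := Real.sqrt (τ + γ) with hs_def
  have hsq : s ^ 2 = τ + γ := Real.sq_sqrt (by linarith)
  have hspos : 0 < s := Real.sqrt_pos.mpr (by linarith)
  have hmpos : (0:ℝ) < m := by exact_mod_cast Nat.lt_of_lt_of_le Nat.zero_lt_one hm
  have hnpos : (0:ℝ) < n := by exact_mod_cast Nat.lt_of_lt_of_le Nat.zero_lt_one hn
  -- the conditional probabilities are positive and the chain rule holds
  set Qa : ℕ → ℝ := fun i => prEvt μ (fun B => rowsAgree i B A₀) with hQa
  have hQpos : ∀ i, 0 < Qa i := by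
    intro i
    exact lt_of_lt_of_le hsupp (le_prEvt μ hμ0 (fun j hj => rfl))
  have hstep : ∀ i : Fin m, pIdx μ i A₀ = Qa ((i : ℕ) + 1) / Qa (i : ℕ) := by
    intro i
    unfold pIdx
    congr 1
    apply prEvt_congr
    intro B
    constructor
    · rintro ⟨h1, h2⟩ j hj
      rcases Nat.lt_succ_iff_lt_or_eq.mp hj with hj | hj
      · exact h2 j hj
      · have : j = i := Fin.ext hj
        subst this; exact h1
    · intro h
      exact ⟨h i (Nat.lt_succ_self _), fun j hj => h j (Nat.lt_succ_of_lt hj)⟩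
  have hppos : ∀ i : Fin m, 0 < pIdx μ i A₀ := by
    intro i
    rw [hstep i]
    exact div_pos (hQpos _) (hQpos _)
  have hchain : ∏ i : Fin m, pIdx μ i A₀ = μ A₀ := by
    have key : ∀ k : ℕ, ∏ i ∈ Finset.range k, (Qa (i + 1) / Qa i) = Qa k / Qa 0 := by
      intro k
      induction k with
      | zero => simp [div_self (hQpos 0).ne']
      | succ k ih =>
        rw [Finset.prod_range_succ, ih]
        rw [div_mul_div_comm, mul_comm (Qa k) (Qa (k + 1))]
        rw [mul_comm (Qa 0) (Qa k), mul_comm (Qa (k + 1)) (Qa k),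
          mul_div_mul_left _ _ (hQpos k).ne']
    calc ∏ i : Fin m, pIdx μ i A₀
        = ∏ i : Fin m, (fun j : ℕ => Qa (j + 1) / Qa j) (i : ℕ) := by
          exact Finset.prod_congr rfl fun i _ => hstep i
      _ = ∏ i ∈ Finset.range m, (Qa (i + 1) / Qa i) :=
          Fin.prod_univ_eq_prod_range (fun j : ℕ => Qa (j + 1) / Qa j) m
      _ = Qa m / Qa 0 := key m
      _ = μ A₀ := by
          rw [show Qa m = μ A₀ from prEvt_rowsAgree_top μ A₀,
            show Qa 0 = 1 from prEvt_rowsAgree_zero μ hμ1 A₀, div_one]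
  -- the sum of the surprises is at least (1-γ)mn
  have hsumq : (1 - γ) * m * n ≤ ∑ i : Fin m, qIdx μ i A₀ := by
    have hlog : ∑ i : Fin m, qIdx μ i A₀ = -Real.logb 2 (μ A₀) := by
      unfold qIdx
      rw [Finset.sum_neg_distrib, ← hchain,
        Real.logb_prod _ _ (fun i _ => (hppos i).ne')]
    rw [hlog]
    have h1 : Real.logb 2 (μ A₀) ≤ Real.logb 2 ((2:ℝ) ^ (-((1 - γ) * (m:ℝ) * n))) :=
      Real.logb_le_logb_of_le (by norm_num) hsupp (hminent A₀)
    rw [Real.logb_rpow (by norm_num : (0:ℝ) < 2) (by norm_num : (2:ℝ) ≠ 1)] at h1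
    linarith
  -- each surprise is at most (1+τ)n
  have hqub : ∀ i : Fin m, qIdx μ i A₀ ≤ (1 + τ) * n := by
    intro i
    unfold qIdx
    simp only [tauRare, not_exists, not_lt] at hrare
    have hp := hrare i
    have h1 : Real.logb 2 ((2:ℝ) ^ (-((n:ℝ) * (1 + τ)))) ≤ Real.logb 2 (pIdx μ i A₀) :=
      Real.logb_le_logb_of_le (by norm_num) (Real.rpow_pos_of_pos (by norm_num) _) hp
    rw [Real.logb_rpow (by norm_num : (0:ℝ) < 2) (by norm_num : (2:ℝ) ≠ 1)] at h1
    nlinarith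
  -- define the exceptional set
  have hS : ∀ S : Finset (Fin m),
      S = Finset.univ.filter (fun i => qIdx μ i A₀ < (1 - s) * n) →
      (S.card : ℝ) ≤ s * m := by
    intro S hS
    have hkm : S.card ≤ m := le_trans (Finset.card_le_univ S) (by simp)
    have hkm' : (S.card : ℝ) ≤ (m : ℝ) := by exact_mod_cast hkm
    have hknn : (0:ℝ) ≤ (S.card : ℝ) := Nat.cast_nonneg _
    have hcompl : (((Sᶜ).card : ℕ) : ℝ) = (m : ℝ) - (S.card : ℝ) := by
      have h1 : (Sᶜ).card = m - S.card := by rw [Finset.card_compl, Fintype.card_fin]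
      rw [h1, Nat.cast_sub hkm]
    have hsum1 : ∑ i ∈ S, qIdx μ i A₀ ≤ (S.card : ℝ) * ((1 - s) * n) := by
      have h := Finset.sum_le_card_nsmul S (fun i => qIdx μ i A₀) ((1 - s) * n)
        (fun i hi => le_of_lt (by
          rw [hS] at hi
          exact (Finset.mem_filter.mp hi).2))
      simpa [nsmul_eq_mul] using h
    have hsum2 : ∑ i ∈ Sᶜ, qIdx μ i A₀ ≤ ((m : ℝ) - (S.card : ℝ)) * ((1 + τ) * n) := by
      have h := Finset.sum_le_card_nsmul Sᶜ (fun i => qIdx μ i A₀) ((1 + τ) * n)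
        (fun i _ => hqub i)
      rw [← hcompl]
      simpa [nsmul_eq_mul] using h
    have hsplit : ∑ i : Fin m, qIdx μ i A₀
        = ∑ i ∈ S, qIdx μ i A₀ + ∑ i ∈ Sᶜ, qIdx μ i A₀ :=
      (Finset.sum_add_sum_compl S _).symm
    set k : ℝ := (S.card : ℝ)
    have hmain : (1 - γ) * m * n ≤ k * ((1 - s) * n) + ((m : ℝ) - k) * ((1 + τ) * n) := by
      calc (1 - γ) * m * n ≤ ∑ i : Fin m, qIdx μ i A₀ := hsumq
        _ = _ := hsplit
        _ ≤ _ := add_le_add hsum1 hsum2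
    have hR : k * ((1 - s) * n) + ((m : ℝ) - k) * ((1 + τ) * n)
        = (k * (1 - s) + ((m : ℝ) - k) * (1 + τ)) * n := by ring
    rw [hR] at hmain
    have hdiv : (1 - γ) * m ≤ k * (1 - s) + ((m : ℝ) - k) * (1 + τ) :=
      le_of_mul_le_mul_right hmain hnpos
    have h2 : k * (s + τ) ≤ (m : ℝ) * (τ + γ) := by nlinarith [hdiv]
    have h3 : (m : ℝ) * (τ + γ) = (m : ℝ) * s ^ 2 := by rw [hsq]
    have h4 : k * (s + τ) ≤ (s * m) * (s + τ) := by
      nlinarith [h2, h3, mul_nonneg (mul_nonneg hmpos.le hspos.le) hτ.le]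
    exact le_of_mul_le_mul_right h4 (by positivity)
  refine ⟨Finset.univ.filter (fun i => qIdx μ i A₀ < (1 - s) * n), hS _ rfl, ?_⟩
  intro i hi
  simp only [Finset.mem_filter, Finset.mem_univ, true_and, not_lt] at hi
  exact hi
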